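/- arXiv:2006.15661 — 2 statements merged into one kernel-verified Lean document; each statement's English description precedes it below -/
import Mathlib

section
/- Let ℓ be a positive even integer and define E_ℓ(t) = ∑_{s=0}^{ℓ} t^s/s! for real t. Then: (1) E_ℓ(t) > 0 for all real t; (2) E_ℓ(t) ≥ 1 for all t ≥ 0; and (3) for all real t ≤ ℓ/e², one has e^t ≤ (1 + e^{−ℓ/2})·E_ℓ(t). -/
noncomputable section

def Epoly (l : ℕ) (t : ℝ) : ℝ := ∑ i ∈ Finset.range (l + 1), t ^ i / (Nat.factorial i : ℝ)

lemma Epoly_hasDerivAt (m : ℕ) (t : ℝ) :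
    HasDerivAt (fun x => Epoly (m + 1) x) (Epoly m t) t := by
  have h : HasDerivAt (fun x : ℝ => ∑ i ∈ Finset.range (m + 2), x ^ i / (Nat.factorial i : ℝ))
      (∑ i ∈ Finset.range (m + 2), (i : ℝ) * t ^ (i - 1) / (Nat.factorial i : ℝ)) t := by
    apply HasDerivAt.fun_sum
    intro i _
    exact (hasDerivAt_pow i t).div_const _
  convert h using 1
  · rfl
  rw [Finset.sum_range_succ']
  simp only [Nat.cast_zero, zero_mul, zero_div, add_zero, Nat.add_sub_cancel]
  unfold Epoly
  apply Finset.sum_congr rfl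
  intro i _
  have hfac : (Nat.factorial i : ℝ) ≠ 0 := Nat.cast_ne_zero.2 (Nat.factorial_ne_zero i)
  rw [Nat.factorial_succ]
  push_cast
  field_simp

lemma Epoly_zero (l : ℕ) : Epoly l 0 = 1 := by
  unfold Epoly
  rw [Finset.sum_range_succ']
  simp

lemma Epoly_succ (m : ℕ) (t : ℝ) :
    Epoly (m + 1) t = Epoly m t + t ^ (m + 1) / (Nat.factorial (m + 1) : ℝ) := by
  unfold Epoly
  rw [Finset.sum_range_succ]

lemma exp_le_Epoly_of_nonpos (l : ℕ) (hpos : 0 < l) (heven : Even l)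
    {t : ℝ} (ht : t ≤ 0) : Real.exp t ≤ Epoly l t := by
  obtain ⟨m, rfl⟩ : ∃ m, l = m + 1 := ⟨l - 1, (Nat.succ_pred_eq_of_pos hpos).symm⟩
  set g : ℝ → ℝ := fun x => Epoly (m + 1) x * Real.exp (-x) with hgdef
  have hg : ∀ x, HasDerivAt g (-(x ^ (m + 1) / (Nat.factorial (m + 1) : ℝ)) * Real.exp (-x)) x := by
    intro x
    have h2 : HasDerivAt (fun x : ℝ => Real.exp (-x)) (-Real.exp (-x)) x := by
      simpa using (hasDerivAt_neg x).exp
    have h3 := (Epoly_hasDerivAt m x).fun_mul h2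
    refine h3.congr_deriv ?_
    rw [Epoly_succ]
    ring
  have hanti : Antitone g := by
    apply antitone_of_deriv_nonpos
    · exact fun x => (hg x).differentiableAt
    · intro x
      rw [(hg x).deriv]
      have h1 : (0:ℝ) ≤ x ^ (m + 1) := heven.pow_nonneg x
      have h2 : (0:ℝ) < Nat.factorial (m + 1) := by positivity
      have h3 : (0:ℝ) ≤ x ^ (m + 1) / (Nat.factorial (m + 1) : ℝ) := div_nonneg h1 h2.le
      have h4 := mul_nonneg h3 (Real.exp_pos (-x)).le
      linarith
  have key : (1:ℝ) ≤ Epoly (m + 1) t * Real.exp (-t) := by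
    have := hanti ht
    simpa [hgdef, Epoly_zero] using this
  rw [Real.exp_neg, ← div_eq_mul_inv] at key
  exact (one_le_div (Real.exp_pos t)).mp key

lemma one_le_Epoly (l : ℕ) {t : ℝ} (ht : 0 ≤ t) : 1 ≤ Epoly l t := by
  unfold Epoly
  have h0 : (0:ℕ) ∈ Finset.range (l + 1) := Finset.mem_range.2 (Nat.succ_pos l)
  have := Finset.single_le_sum (f := fun i => t ^ i / (Nat.factorial i : ℝ))
    (fun i _ => by positivity) h0
  simpa using this

lemma pow_div_factorial_le_exp {t : ℝ} (ht : 0 ≤ t) (n : ℕ) :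
    t ^ n / (Nat.factorial n : ℝ) ≤ Real.exp t := by
  have h1 : t ^ n / (Nat.factorial n : ℝ) ≤ ∑ i ∈ Finset.range (n + 1), t ^ i / (Nat.factorial i : ℝ) := by
    have hn : n ∈ Finset.range (n + 1) := Finset.mem_range.2 (Nat.lt_succ_self n)
    exact Finset.single_le_sum (f := fun i => t ^ i / (Nat.factorial i : ℝ))
      (fun i _ => by positivity) hn
  exact h1.trans (Real.sum_le_exp_of_nonneg ht _)


set_option maxHeartbeats 1000000 in
lemma tail_bound (l : ℕ) (hpos : 0 < l) {t : ℝ} (ht0 : 0 ≤ t)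
    (ht : t ≤ (l : ℝ) / Real.exp 1 ^ 2) :
    Real.exp t ≤ Epoly l t + Real.exp (-(l : ℝ) / 2) := by
  have hsum := Real.summable_pow_div_factorial t
  have hexp : Real.exp t = ∑' n : ℕ, t ^ n / (Nat.factorial n : ℝ) := by
    rw [Real.exp_eq_exp_ℝ]
    exact congrFun NormedSpace.exp_eq_tsum_div t
  have hsplit : Epoly l t + (∑' k : ℕ, t ^ (k + (l + 1)) / (Nat.factorial (k + (l + 1)) : ℝ))
      = ∑' n : ℕ, t ^ n / (Nat.factorial n : ℝ) := Summable.sum_add_tsum_nat_add (l + 1) hsum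
  have hterm : ∀ k : ℕ, t ^ (k + (l + 1)) / (Nat.factorial (k + (l + 1)) : ℝ)
      ≤ Real.exp (-1) ^ (k + (l + 1)) := by
    intro k
    set s := k + (l + 1) with hs
    have hls : (l : ℝ) ≤ (s : ℝ) := by exact_mod_cast (by omega : l ≤ s)
    have hspos : (0 : ℝ) < (s : ℝ) := by exact_mod_cast (by omega : 0 < s)
    have hfacpos : (0 : ℝ) < (Nat.factorial s : ℝ) := by
      exact_mod_cast Nat.factorial_pos s
    have hE : (0 : ℝ) < Real.exp 1 := Real.exp_pos 1
    have hstep1 : t ^ s ≤ ((l : ℝ) / Real.exp 1 ^ 2) ^ s := pow_le_pow_left₀ ht0 ht s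
    have hss : ((s : ℝ)) ^ s ≤ Real.exp 1 ^ s * (Nat.factorial s : ℝ) := by
      have h := pow_div_factorial_le_exp (t := (s : ℝ)) hspos.le s
      have h2 : Real.exp ((s : ℝ)) = Real.exp 1 ^ s := by
        rw [← Real.exp_nat_mul]; norm_num
      rw [h2, div_le_iff₀ hfacpos] at h
      exact h
    have key : t ^ s / (Nat.factorial s : ℝ) ≤ ((l : ℝ) / (Real.exp 1 * s)) ^ s := by
      rw [div_le_iff₀ hfacpos]
      have h3 : ((s : ℝ) / Real.exp 1) ^ s ≤ (Nat.factorial s : ℝ) := by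
        rw [div_pow, div_le_iff₀ (by positivity)]
        linarith [hss]
      calc t ^ s ≤ ((l : ℝ) / Real.exp 1 ^ 2) ^ s := hstep1
        _ = ((l : ℝ) / (Real.exp 1 * s)) ^ s * ((s : ℝ) / Real.exp 1) ^ s := by
            rw [← mul_pow]
            congr 1
            rw [div_mul_div_comm,
              show Real.exp 1 * (s : ℝ) * Real.exp 1 = Real.exp 1 ^ 2 * (s : ℝ) by ring,
              mul_div_mul_right _ _ hspos.ne']
        _ ≤ ((l : ℝ) / (Real.exp 1 * s)) ^ s * (Nat.factorial s : ℝ) := by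
            exact mul_le_mul_of_nonneg_left h3 (by positivity)
    have final : ((l : ℝ) / (Real.exp 1 * s)) ^ s ≤ Real.exp (-1) ^ s := by
      apply pow_le_pow_left₀ (by positivity)
      rw [div_le_iff₀ (by positivity)]
      have heq : Real.exp (-1) * (Real.exp 1 * s) = s := by
        rw [Real.exp_neg]; field_simp
      rw [heq]; exact hls
    exact key.trans final
  have hlt1 : Real.exp (-1) < 1 := by
    rw [Real.exp_lt_one_iff]; norm_num
  have hsum2 : Summable (fun k : ℕ => t ^ (k + (l + 1)) / (Nat.factorial (k + (l + 1)) : ℝ)) :=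
    (summable_nat_add_iff (l + 1)).2 hsum
  have hgeo : Summable (fun k : ℕ => Real.exp (-1) ^ (k + (l + 1))) := by
    simp_rw [pow_add]
    exact (summable_geometric_of_lt_one (Real.exp_pos _).le hlt1).mul_right _
  have htail : (∑' k : ℕ, t ^ (k + (l + 1)) / (Nat.factorial (k + (l + 1)) : ℝ))
      ≤ ∑' k : ℕ, Real.exp (-1) ^ (k + (l + 1)) := Summable.tsum_le_tsum hterm hsum2 hgeo
  have hgeoval : (∑' k : ℕ, Real.exp (-1) ^ (k + (l + 1)))
      = Real.exp (-1) ^ (l + 1) * (1 - Real.exp (-1))⁻¹ := by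
    simp_rw [pow_add]
    rw [tsum_mul_right, tsum_geometric_of_lt_one (Real.exp_pos _).le hlt1]
    ring
  have he2 : Real.exp (-1) ≤ 1 / 2 := by
    have h2 : (2 : ℝ) ≤ Real.exp 1 := by linarith [Real.add_one_le_exp (1 : ℝ)]
    rw [Real.exp_neg]
    rw [inv_le_comm₀ (Real.exp_pos 1) (by norm_num)]
    linarith
  have hnum : Real.exp (-1) ^ (l + 1) * (1 - Real.exp (-1))⁻¹ ≤ Real.exp (-(l : ℝ) / 2) := by
    have h1 : Real.exp (-1) ^ (l + 1) = Real.exp (-((l : ℝ) + 1)) := by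
      rw [← Real.exp_nat_mul]
      norm_num
    have h3 : Real.exp (-((l : ℝ) + 1)) = Real.exp (-(l : ℝ) / 2) * Real.exp (-(l : ℝ) / 2 - 1) := by
      rw [← Real.exp_add]; ring_nf
    have h4 : Real.exp (-(l : ℝ) / 2 - 1) ≤ Real.exp (-1) := by
      apply Real.exp_le_exp.2
      have : (0 : ℝ) ≤ (l : ℝ) := Nat.cast_nonneg l
      linarith
    have h5 : (0 : ℝ) < 1 - Real.exp (-1) := by linarith
    rw [h1, inv_eq_one_div, mul_one_div, div_le_iff₀ h5, h3]
    apply mul_le_mul_of_nonneg_left _ (Real.exp_pos _).le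
    linarith
  have hfinal := (htail.trans_eq hgeoval).trans hnum
  rw [hexp, ← hsplit]
  linarith

/-- For ℓ a positive even integer:
(1) E_ℓ(t) > 0 for all real t; (2) E_ℓ(t) ≥ 1 for all t ≥ 0;
(3) for all real t ≤ ℓ/e², one has e^t ≤ (1 + e^{-ℓ/2})·E_ℓ(t). -/
theorem statement7 (l : ℕ) (hpos : 0 < l) (heven : Even l) :
    (∀ t : ℝ, 0 < Epoly l t) ∧
    (∀ t : ℝ, 0 ≤ t → 1 ≤ Epoly l t) ∧
    (∀ t : ℝ, t ≤ (l : ℝ) / Real.exp 1 ^ 2 →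
      Real.exp t ≤ (1 + Real.exp (-(l : ℝ) / 2)) * Epoly l t) := by
  constructor
  · intro t
    rcases le_or_gt t 0 with h | h
    · exact lt_of_lt_of_le (Real.exp_pos t) (exp_le_Epoly_of_nonpos l hpos heven h)
    · linarith [one_le_Epoly l h.le]
  refine ⟨fun t ht => one_le_Epoly l ht, ?_⟩
  intro t ht
  have hE : (0 : ℝ) < Real.exp (-(l : ℝ) / 2) := Real.exp_pos _
  rcases le_or_gt t 0 with h | h
  · have h1 := exp_le_Epoly_of_nonpos l hpos heven h
    have h2 : 0 < Epoly l t := lt_of_lt_of_le (Real.exp_pos t) h1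
    nlinarith
  · have h1 := tail_bound l hpos h.le ht
    have h2 := one_le_Epoly l h.le
    nlinarith
end
end

section
/- For every nonnegative integer α, ∑_{i,j,k ≥ 0, 2i + 3j + 3k = α} 1/( i!·j!·k!·3^{j+k} ) ≤ 2·(5/3)^{α/3} / ⌊α/3⌋! . -/
open Finset

private noncomputable def F (α i j k : ℕ) : ℝ :=
  if 2 * i + 3 * j + 3 * k = α then
    ((Nat.factorial i : ℝ) * (Nat.factorial j : ℝ) * (Nat.factorial k : ℝ) *
      (3 : ℝ) ^ (j + k))⁻¹ else 0

private noncomputable def S (α : ℕ) : ℝ :=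
  ∑ i ∈ Finset.range (α + 1), ∑ j ∈ Finset.range (α + 1), ∑ k ∈ Finset.range (α + 1), F α i j k

private lemma F_big {α i j k : ℕ} (h : α < i ∨ α < j ∨ α < k) : F α i j k = 0 := by
  unfold F
  rw [if_neg]
  omega

private lemma sum_ext (α : ℕ) {N1 N2 N3 : ℕ} (h1 : α < N1) (h2 : α < N2) (h3 : α < N3) :
    ∑ i ∈ Finset.range N1, ∑ j ∈ Finset.range N2, ∑ k ∈ Finset.range N3, F α i j k = S α := by
  unfold S
  rw [← Finset.sum_subset (Finset.range_subset_range.mpr h1)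
      (fun i _ hi => Finset.sum_eq_zero fun j _ => Finset.sum_eq_zero fun k _ =>
        F_big (by simp only [Finset.mem_range] at hi; omega))]
  refine Finset.sum_congr rfl fun i _ => ?_
  rw [← Finset.sum_subset (Finset.range_subset_range.mpr h2)
      (fun j _ hj => Finset.sum_eq_zero fun k _ =>
        F_big (by simp only [Finset.mem_range] at hj; omega))]
  refine Finset.sum_congr rfl fun j _ => ?_
  rw [← Finset.sum_subset (Finset.range_subset_range.mpr h3)
      (fun k _ hk => F_big (by simp only [Finset.mem_range] at hk; omega))]

private lemma F_shift_i {α : ℕ} (hα : 2 ≤ α) (i j k : ℕ) :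
    (2 * ((i : ℝ) + 1)) * F α (i + 1) j k = 2 * F (α - 2) i j k := by
  unfold F
  by_cases h : 2 * i + 3 * j + 3 * k = α - 2
  · rw [if_pos (by omega), if_pos h, Nat.factorial_succ]
    have h1 : (0:ℝ) < (Nat.factorial i : ℝ) := by positivity
    have h2 : (0:ℝ) < (Nat.factorial j : ℝ) := by positivity
    have h3 : (0:ℝ) < (Nat.factorial k : ℝ) := by positivity
    have h4 : (0:ℝ) < (3:ℝ) ^ (j + k) := by positivity
    have h5 : (0:ℝ) < (i:ℝ) + 1 := by positivity
    push_cast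
    field_simp
  · rw [if_neg (by omega), if_neg h, mul_zero, mul_zero]

private lemma F_shift_j {α : ℕ} (hα : 3 ≤ α) (i j k : ℕ) :
    (3 * ((j : ℝ) + 1)) * F α i (j + 1) k = F (α - 3) i j k := by
  unfold F
  by_cases h : 2 * i + 3 * j + 3 * k = α - 3
  · rw [if_pos (by omega), if_pos h, Nat.factorial_succ,
      show j + 1 + k = (j + k) + 1 from by omega, pow_succ]
    have h1 : (0:ℝ) < (Nat.factorial i : ℝ) := by positivity
    have h2 : (0:ℝ) < (Nat.factorial j : ℝ) := by positivity
    have h3 : (0:ℝ) < (Nat.factorial k : ℝ) := by positivity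
    have h4 : (0:ℝ) < (3:ℝ) ^ (j + k) := by positivity
    have h5 : (0:ℝ) < (j:ℝ) + 1 := by positivity
    push_cast
    field_simp
  · rw [if_neg (by omega), if_neg h, mul_zero]

private lemma F_shift_k {α : ℕ} (hα : 3 ≤ α) (i j k : ℕ) :
    (3 * ((k : ℝ) + 1)) * F α i j (k + 1) = F (α - 3) i j k := by
  unfold F
  by_cases h : 2 * i + 3 * j + 3 * k = α - 3
  · rw [if_pos (by omega), if_pos h, Nat.factorial_succ,
      show j + (k + 1) = (j + k) + 1 from by omega, pow_succ]
    have h1 : (0:ℝ) < (Nat.factorial i : ℝ) := by positivity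
    have h2 : (0:ℝ) < (Nat.factorial j : ℝ) := by positivity
    have h3 : (0:ℝ) < (Nat.factorial k : ℝ) := by positivity
    have h4 : (0:ℝ) < (3:ℝ) ^ (j + k) := by positivity
    have h5 : (0:ℝ) < (k:ℝ) + 1 := by positivity
    push_cast
    field_simp
  · rw [if_neg (by omega), if_neg h, mul_zero]

private lemma S_rec {α : ℕ} (hα : 3 ≤ α) :
    (α : ℝ) * S α = 2 * S (α - 2) + 2 * S (α - 3) := by
  have key : ∀ i j k : ℕ, (α : ℝ) * F α i j k
      = (2 * (i:ℝ)) * F α i j k + ((3 * (j:ℝ)) * F α i j k + (3 * (k:ℝ)) * F α i j k) := by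
    intro i j k
    unfold F
    by_cases h : 2 * i + 3 * j + 3 * k = α
    · rw [if_pos h]
      have : (α : ℝ) = 2 * i + 3 * j + 3 * k := by exact_mod_cast congrArg Nat.cast h.symm
      rw [this]; ring
    · rw [if_neg h]; ring
  have hA : ∑ i ∈ Finset.range (α + 1), ∑ j ∈ Finset.range (α + 1), ∑ k ∈ Finset.range (α + 1),
      (2 * (i:ℝ)) * F α i j k = 2 * S (α - 2) := by
    rw [Finset.sum_range_succ']
    have h0 : ∑ j ∈ Finset.range (α + 1), ∑ k ∈ Finset.range (α + 1),
        (2 * ((0:ℕ):ℝ)) * F α 0 j k = 0 := by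
      simp
    rw [h0, add_zero]
    have : ∀ i ∈ Finset.range α, (∑ j ∈ Finset.range (α + 1), ∑ k ∈ Finset.range (α + 1),
        (2 * ((i+1 : ℕ):ℝ)) * F α (i+1) j k)
        = ∑ j ∈ Finset.range (α + 1), ∑ k ∈ Finset.range (α + 1), 2 * F (α - 2) i j k := by
      intro i _
      refine Finset.sum_congr rfl fun j _ => Finset.sum_congr rfl fun k _ => ?_
      push_cast
      exact F_shift_i (by omega) i j k
    rw [Finset.sum_congr rfl this]
    simp only [← Finset.mul_sum]
    rw [sum_ext (α - 2) (by omega) (by omega) (by omega)]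
  have hB : ∑ i ∈ Finset.range (α + 1), ∑ j ∈ Finset.range (α + 1), ∑ k ∈ Finset.range (α + 1),
      (3 * (j:ℝ)) * F α i j k = S (α - 3) := by
    have hi : ∀ i ∈ Finset.range (α + 1),
        (∑ j ∈ Finset.range (α + 1), ∑ k ∈ Finset.range (α + 1), (3 * (j:ℝ)) * F α i j k)
        = ∑ j ∈ Finset.range α, ∑ k ∈ Finset.range (α + 1), F (α - 3) i j k := by
      intro i _
      rw [Finset.sum_range_succ']
      have h0 : ∑ k ∈ Finset.range (α + 1), (3 * ((0:ℕ):ℝ)) * F α i 0 k = 0 := by simp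
      rw [h0, add_zero]
      refine Finset.sum_congr rfl fun j _ => Finset.sum_congr rfl fun k _ => ?_
      push_cast
      exact F_shift_j hα i j k
    rw [Finset.sum_congr rfl hi]
    exact sum_ext (α - 3) (by omega) (by omega) (by omega)
  have hC : ∑ i ∈ Finset.range (α + 1), ∑ j ∈ Finset.range (α + 1), ∑ k ∈ Finset.range (α + 1),
      (3 * (k:ℝ)) * F α i j k = S (α - 3) := by
    have hij : ∀ i ∈ Finset.range (α + 1), ∀ j ∈ Finset.range (α + 1),
        (∑ k ∈ Finset.range (α + 1), (3 * (k:ℝ)) * F α i j k)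
        = ∑ k ∈ Finset.range α, F (α - 3) i j k := by
      intro i _ j _
      rw [Finset.sum_range_succ']
      have h0 : (3 * ((0:ℕ):ℝ)) * F α i j 0 = 0 := by simp
      rw [h0, add_zero]
      refine Finset.sum_congr rfl fun k _ => ?_
      push_cast
      exact F_shift_k hα i j k
    rw [Finset.sum_congr rfl (fun i hi => Finset.sum_congr rfl (fun j hj => hij i hi j hj))]
    exact sum_ext (α - 3) (by omega) (by omega) (by omega)
  calc (α : ℝ) * S α
      = ∑ i ∈ Finset.range (α + 1), ∑ j ∈ Finset.range (α + 1), ∑ k ∈ Finset.range (α + 1),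
        (α : ℝ) * F α i j k := by
        unfold S; simp only [Finset.mul_sum]
    _ = (∑ i ∈ Finset.range (α + 1), ∑ j ∈ Finset.range (α + 1), ∑ k ∈ Finset.range (α + 1),
          (2 * (i:ℝ)) * F α i j k)
        + ((∑ i ∈ Finset.range (α + 1), ∑ j ∈ Finset.range (α + 1), ∑ k ∈ Finset.range (α + 1),
          (3 * (j:ℝ)) * F α i j k)
        + ∑ i ∈ Finset.range (α + 1), ∑ j ∈ Finset.range (α + 1), ∑ k ∈ Finset.range (α + 1),
          (3 * (k:ℝ)) * F α i j k) := by
        simp only [← Finset.sum_add_distrib]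
        exact Finset.sum_congr rfl fun i _ => Finset.sum_congr rfl fun j _ =>
          Finset.sum_congr rfl fun k _ => key i j k
    _ = 2 * S (α - 2) + 2 * S (α - 3) := by rw [hA, hB, hC]; ring

private lemma y_facts :
    (0:ℝ) < (5/3:ℝ) ^ ((1:ℝ)/3) ∧ ((5/3:ℝ) ^ ((1:ℝ)/3)) ^ (3:ℕ) = 5/3 ∧
      1 ≤ (5/3:ℝ) ^ ((1:ℝ)/3) ∧ (5/3:ℝ) ^ ((1:ℝ)/3) ≤ 3/2 := by
  set y := (5/3:ℝ) ^ ((1:ℝ)/3) with hy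
  have hy0 : 0 < y := Real.rpow_pos_of_pos (by norm_num) _
  have hy3 : y ^ (3:ℕ) = 5/3 := by
    rw [hy, ← Real.rpow_natCast ((5/3:ℝ) ^ ((1:ℝ)/3)) 3, ← Real.rpow_mul (by norm_num)]
    norm_num
  refine ⟨hy0, hy3, ?_, ?_⟩
  · nlinarith [sq_nonneg (y - 1), sq_nonneg (y + 1), sq_nonneg y]
  · nlinarith [sq_nonneg (y - 3/2), sq_nonneg (y + 3/2), sq_nonneg y]

private lemma rpow_eq_pow (n : ℕ) :
    (5/3:ℝ) ^ ((n : ℝ) / 3) = ((5/3:ℝ) ^ ((1:ℝ)/3)) ^ n := by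
  rw [show ((n:ℝ)/3) = (1/3) * (n:ℝ) by ring, Real.rpow_mul (by norm_num),
    Real.rpow_natCast]

private lemma main_bound (α : ℕ) :
    S α ≤ 2 * (5 / 3 : ℝ) ^ ((α : ℝ) / 3) / (Nat.factorial (α / 3) : ℝ) := by
  induction α using Nat.strong_induction_on with
  | _ α ih =>
  obtain ⟨hy0, hy3, hy1, hy2⟩ := y_facts
  set y := (5/3:ℝ) ^ ((1:ℝ)/3) with hydef
  rw [rpow_eq_pow]
  by_cases hα : 3 ≤ α
  · -- inductive step
    set m := α / 3 with hm
    have hm1 : 1 ≤ m := by omega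
    have h3 : (α - 3) / 3 = m - 1 := by omega
    have ih2 := ih (α - 2) (by omega)
    have ih3 := ih (α - 3) (by omega)
    rw [rpow_eq_pow] at ih2 ih3
    rw [h3] at ih3
    have hFm : (0:ℝ) < (Nat.factorial (m - 1) : ℝ) := by positivity
    have hfact : (Nat.factorial m : ℝ) = (m : ℝ) * (Nat.factorial (m - 1) : ℝ) := by
      rw [← Nat.mul_factorial_pred (by omega : m ≠ 0)]
      push_cast
      ring
    have ha : (0:ℝ) < y ^ (α - 3) := pow_pos hy0 _
    have hpow2 : y ^ (α - 2) = y ^ (α - 3) * y := by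
      rw [← pow_succ]; congr 1; omega
    have hpowα : y ^ α = y ^ (α - 3) * (5/3) := by
      rw [← hy3, ← pow_add]; congr 1; omega
    have hαpos : (0:ℝ) < (α : ℝ) := by positivity
    have hrec := S_rec hα
    have hMpos : (0:ℝ) < (Nat.factorial m : ℝ) := by positivity
    have hSeq : S α = (2 * S (α - 2) + 2 * S (α - 3)) / (α:ℝ) := by
      rw [← hrec]
      field_simp
    rw [hSeq, div_le_div_iff₀ hαpos hMpos]
    have hα3m : (3:ℝ) * (m:ℝ) ≤ (α:ℝ) := by
      have : 3 * m ≤ α := by omega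
      exact_mod_cast this
    have hmR : (1:ℝ) ≤ (m:ℝ) := by exact_mod_cast hm1
    have hFne : (Nat.factorial (m - 1) : ℝ) ≠ 0 := ne_of_gt hFm
    have hmne : (m:ℝ) ≠ 0 := by linarith
    by_cases hr : α % 3 = 2
    · have h2 : (α - 2) / 3 = m := by omega
      rw [h2] at ih2
      calc (2 * S (α - 2) + 2 * S (α - 3)) * (Nat.factorial m : ℝ)
          ≤ (2 * (2 * y ^ (α - 2) / (Nat.factorial m : ℝ))
            + 2 * (2 * y ^ (α - 3) / (Nat.factorial (m - 1) : ℝ))) * (Nat.factorial m : ℝ) := by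
            apply mul_le_mul_of_nonneg_right (by linarith [ih2, ih3]) hMpos.le
        _ ≤ 2 * y ^ α * (α:ℝ) := by
            rw [hpow2, hpowα, hfact]
            have e : (2 * (2 * (y ^ (α - 3) * y) / ((m:ℝ) * (Nat.factorial (m - 1) : ℝ)))
                + 2 * (2 * y ^ (α - 3) / (Nat.factorial (m - 1) : ℝ)))
                * ((m:ℝ) * (Nat.factorial (m - 1) : ℝ))
                = 4 * y ^ (α - 3) * y + 4 * y ^ (α - 3) * (m:ℝ) := by
              field_simp
              ring
            rw [e]
            have hα' : (α:ℝ) = 3 * (m:ℝ) + 2 := by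
              have : α = 3 * m + 2 := by omega
              exact_mod_cast this
            rw [hα']
            nlinarith [ha, mul_pos ha (lt_of_lt_of_le one_pos hmR)]
    · have h2 : (α - 2) / 3 = m - 1 := by omega
      rw [h2] at ih2
      calc (2 * S (α - 2) + 2 * S (α - 3)) * (Nat.factorial m : ℝ)
          ≤ (2 * (2 * y ^ (α - 2) / (Nat.factorial (m - 1) : ℝ))
            + 2 * (2 * y ^ (α - 3) / (Nat.factorial (m - 1) : ℝ))) * (Nat.factorial m : ℝ) := by
            apply mul_le_mul_of_nonneg_right (by linarith [ih2, ih3]) hMpos.le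
        _ ≤ 2 * y ^ α * (α:ℝ) := by
            rw [hpow2, hpowα, hfact]
            have e : (2 * (2 * (y ^ (α - 3) * y) / (Nat.factorial (m - 1) : ℝ))
                + 2 * (2 * y ^ (α - 3) / (Nat.factorial (m - 1) : ℝ)))
                * ((m:ℝ) * (Nat.factorial (m - 1) : ℝ))
                = (4 * y ^ (α - 3) * y + 4 * y ^ (α - 3)) * (m:ℝ) := by
              field_simp
              ring
            rw [e]
            nlinarith [ha, mul_pos ha (lt_of_lt_of_le one_pos hmR),
              mul_nonneg ha.le (sub_nonneg.mpr hα3m)]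
  · -- base cases α = 0, 1, 2
    interval_cases α
    · have hS : S 0 = 1 := by
        unfold S F
        norm_num
      rw [hS]
      norm_num
    · have hS : S 1 = 0 := by
        unfold S F
        simp [Finset.sum_range_succ]
      rw [hS]
      positivity
    · have hS : S 2 = 1 := by
        unfold S F
        simp [Finset.sum_range_succ]
      rw [hS]
      have h1 : (1:ℝ) ≤ y ^ 2 := by nlinarith
      have h23 : (2:ℕ)/3 = 0 := rfl
      rw [h23, Nat.factorial_zero, Nat.cast_one, div_one]
      linarith
  

/-- For every nonnegative integer α,
∑_{i,j,k ≥ 0, 2i+3j+3k = α} 1/(i!·j!·k!·3^{j+k}) ≤ 2·(5/3)^{α/3}/⌊α/3⌋! . -/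
theorem statement19 (α : ℕ) :
    ∑ i ∈ Finset.range (α + 1), ∑ j ∈ Finset.range (α + 1), ∑ k ∈ Finset.range (α + 1),
      (if 2 * i + 3 * j + 3 * k = α then
        ((Nat.factorial i : ℝ) * (Nat.factorial j : ℝ) * (Nat.factorial k : ℝ) *
          (3 : ℝ) ^ (j + k))⁻¹ else 0)
      ≤ 2 * (5 / 3 : ℝ) ^ ((α : ℝ) / 3) / (Nat.factorial (α / 3) : ℝ) := by
  exact main_bound α
end
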